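/- arXiv:1512.00079 — 3 statements merged into one kernel-verified Lean document; each statement's English description precedes it below -/
import Mathlib

section
/- Let n ≥ 2 and let φ : H_n → H_n be an injective group homomorphism. Then for each i ∈ {2,…,n} there exists a point x ∈ X_n with φ(α)(x) ≠ x whose orbit under φ(g_i) is infinite. Moreover, for any point x in the support of φ(α) whose orbit under φ(g_i) is infinite, the point φ(α)(x) also has infinite orbit under φ(g_i). -/
/-! ## Houghton's groups: basic setup -/

/-- The underlying set of Houghton's group: `n` rays of discrete points;
`(i, p)` is the point at position `p` on the ray `R_i`. -/
abbrev XH (n : ℕ) : Type := Fin n × ℕ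

/-- `g` acts, outside a finite set, as the translation by `m i` on the ray `R_i`. -/
def HasTranslationVector {n : ℕ} (g : Equiv.Perm (XH n)) (m : Fin n → ℤ) : Prop :=
  ∃ K : Finset (XH n), ∀ x : XH n, x ∉ K →
    (g x).1 = x.1 ∧ ((g x).2 : ℤ) = (x.2 : ℤ) + m x.1

/-- An eventual translation of `X_n`. -/
def IsEventualTranslation {n : ℕ} (g : Equiv.Perm (XH n)) : Prop :=
  ∃ m : Fin n → ℤ, HasTranslationVector g m

/-- Houghton's group `H_n`: the group of all eventual translations of `X_n`. -/
def Houghton (n : ℕ) : Subgroup (Equiv.Perm (XH n)) where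
  carrier := {g | IsEventualTranslation g}
  one_mem' := ⟨0, ∅, fun x _ => by simp⟩
  mul_mem' := by
    rintro a b ⟨ma, Ka, hKa⟩ ⟨mb, Kb, hKb⟩
    classical
    refine ⟨ma + mb, Kb ∪ Kb.image b ∪ Ka.image b.symm, fun x hx => ?_⟩
    simp only [Finset.mem_union, not_or] at hx
    have hxb : x ∉ Kb := hx.1.1
    have hbx : b x ∉ Ka := by
      intro hc
      exact hx.2 (Finset.mem_image.mpr ⟨b x, hc, b.symm_apply_apply x⟩)
    obtain ⟨hb1, hb2⟩ := hKb x hxb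
    obtain ⟨ha1, ha2⟩ := hKa (b x) hbx
    refine ⟨?_, ?_⟩
    · show (a (b x)).1 = x.1
      rw [ha1, hb1]
    · show ((a (b x)).2 : ℤ) = (x.2 : ℤ) + (ma + mb) x.1
      rw [ha2, hb1, hb2, Pi.add_apply]
      ring
  inv_mem' := by
    rintro a ⟨m, K, hK⟩
    classical
    refine ⟨-m, K.image a, fun x hx => ?_⟩
    have hy : a⁻¹ x ∉ K := by
      intro hc
      exact hx (Finset.mem_image.mpr ⟨a⁻¹ x, hc, a.apply_symm_apply x⟩)
    obtain ⟨e1, e2⟩ := hK _ hy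
    rw [show a (a⁻¹ x) = x from a.apply_symm_apply x] at e1 e2
    refine ⟨e1.symm, ?_⟩
    rw [← e1] at e2
    rw [Pi.neg_apply]
    omega

/-- The subgroup of finitely supported permutations of `X_n`. -/
def FSymSub (n : ℕ) : Subgroup (Equiv.Perm (XH n)) where
  carrier := {g | {x | g x ≠ x}.Finite}
  one_mem' := by simp
  mul_mem' := by
    intro a b ha hb
    apply Set.Finite.subset (ha.union hb)
    intro x hx
    by_cases h : b x = x
    · left
      show a x ≠ x
      simpa [Equiv.Perm.mul_apply, h] using hx
    · right; exact h
  inv_mem' := by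
    intro a ha
    apply Set.Finite.subset ha
    intro x hx
    show a x ≠ x
    intro hc
    apply hx
    show a⁻¹ x = x
    conv_lhs => rw [← hc]
    exact a.symm_apply_apply x

/-- The subgroup of finitely supported even permutations of `X_n`:
products of an even number of transpositions. -/
def FAltSub (n : ℕ) : Subgroup (Equiv.Perm (XH n)) where
  carrier := {g | ∃ l : List (Equiv.Perm (XH n)),
    (∀ τ ∈ l, τ.IsSwap) ∧ Even l.length ∧ l.prod = g}
  one_mem' := ⟨[], by simp, by simp, by simp⟩
  mul_mem' := by
    rintro a b ⟨la, hla, hea, rfl⟩ ⟨lb, hlb, heb, rfl⟩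
    refine ⟨la ++ lb, ?_, ?_, List.prod_append⟩
    · intro τ hτ
      rcases List.mem_append.mp hτ with h | h
      exacts [hla τ h, hlb τ h]
    · simpa using hea.add heb
  inv_mem' := by
    rintro a ⟨l, hl, he, rfl⟩
    refine ⟨(l.map fun x => x⁻¹).reverse, ?_, by simpa using he,
      (List.prod_inv_reverse l).symm⟩
    intro τ hτ
    rw [List.mem_reverse, List.mem_map] at hτ
    obtain ⟨σ, hσ, rfl⟩ := hτ
    obtain ⟨x, y, hxy, rfl⟩ := hl σ hσ
    exact ⟨x, y, hxy, by rw [Equiv.swap_inv]⟩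

/-- `FSym_n` and `FAlt_n` viewed as subgroups of `H_n`. -/
def FSymIn (n : ℕ) : Subgroup (Houghton n) := (FSymSub n).comap (Houghton n).subtype

def FAltIn (n : ℕ) : Subgroup (Houghton n) := (FAltSub n).comap (Houghton n).subtype

/-- The index of the first ray `R_1`. -/
def ray0 (n : ℕ) (hn : 0 < n) : Fin n := ⟨0, hn⟩

/-- The underlying function of the generator `g_i`. -/
def gFun (n : ℕ) (hn : 0 < n) (i : Fin n) : XH n → XH n := fun x =>
  if x.1 = ray0 n hn then (if x.2 = 0 then (i, 0) else (ray0 n hn, x.2 - 1))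
  else if x.1 = i then (i, x.2 + 1) else x

/-- The inverse of `gFun`. -/
def gInvFun (n : ℕ) (hn : 0 < n) (i : Fin n) : XH n → XH n := fun x =>
  if x.1 = i then (if x.2 = 0 then (ray0 n hn, 0) else (i, x.2 - 1))
  else if x.1 = ray0 n hn then (ray0 n hn, x.2 + 1) else x

/-- The generator `g_i` of `H_n` (as a permutation): it translates the first ray
down by one, sends `(1,1)` to `(i,1)` and translates the ray `R_i` up by one. -/
def gGen (n : ℕ) (hn : 0 < n) (i : Fin n) (hi : i ≠ ray0 n hn) : Equiv.Perm (XH n) where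
  toFun := gFun n hn i
  invFun := gInvFun n hn i
  left_inv := by
    rintro ⟨j, p⟩
    show gInvFun n hn i (gFun n hn i (j, p)) = (j, p)
    simp only [gFun, gInvFun]
    split_ifs <;> simp_all [Prod.ext_iff] <;> omega
  right_inv := by
    rintro ⟨j, p⟩
    show gFun n hn i (gInvFun n hn i (j, p)) = (j, p)
    simp only [gFun, gInvFun]
    split_ifs <;> simp_all [Prod.ext_iff] <;> omega

/-- The translation vector of `g_i`. -/
def gVec (n : ℕ) (hn : 0 < n) (i : Fin n) : Fin n → ℤ :=
  fun j => if j = ray0 n hn then -1 else if j = i then 1 else 0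

theorem gGen_mem (n : ℕ) (hn : 0 < n) (i : Fin n) (hi : i ≠ ray0 n hn) :
    gGen n hn i hi ∈ Houghton n := by
  refine ⟨gVec n hn i, {(ray0 n hn, 0)}, ?_⟩
  rintro ⟨j, p⟩ hx
  rw [Finset.mem_singleton] at hx
  have hx' : j ≠ ray0 n hn ∨ p ≠ 0 := by
    by_contra h
    push_neg at h
    exact hx (by rw [h.1, h.2])
  show (gFun n hn i (j, p)).1 = j ∧ ((gFun n hn i (j, p)).2 : ℤ) = (p : ℤ) + gVec n hn i j
  simp only [gFun, gVec]
  split_ifs <;> simp_all [Prod.ext_iff] <;> omega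

/-- The generator `g_i` as an element of `H_n`. -/
def hGen (n : ℕ) (hn : 0 < n) (i : Fin n) (hi : i ≠ ray0 n hn) : Houghton n :=
  ⟨gGen n hn i hi, gGen_mem n hn i hi⟩

/-- The transposition `α` exchanging `(1,1)` and `(1,2)`. -/
def alphaPerm (n : ℕ) (hn : 0 < n) : Equiv.Perm (XH n) :=
  Equiv.swap (ray0 n hn, 0) (ray0 n hn, 1)

theorem alphaPerm_mem (n : ℕ) (hn : 0 < n) : alphaPerm n hn ∈ Houghton n := by
  refine ⟨0, {(ray0 n hn, 0), (ray0 n hn, 1)}, ?_⟩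
  intro x hx
  simp only [Finset.mem_insert, Finset.mem_singleton, not_or] at hx
  rw [show alphaPerm n hn x = x from Equiv.swap_apply_of_ne_of_ne hx.1 hx.2]
  simp

/-- `α` as an element of `H_n`. -/
def hAlpha (n : ℕ) (hn : 0 < n) : Houghton n := ⟨alphaPerm n hn, alphaPerm_mem n hn⟩

theorem alphaPerm_mem_FSym (n : ℕ) (hn : 0 < n) : alphaPerm n hn ∈ FSymSub n := by
  show {x | alphaPerm n hn x ≠ x}.Finite
  apply Set.Finite.subset ((Set.finite_singleton (ray0 n hn, 1)).insert (ray0 n hn, 0))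
  intro x hx
  by_contra hc
  simp only [Set.mem_insert_iff, Set.mem_singleton_iff, not_or] at hc
  exact hx (Equiv.swap_apply_of_ne_of_ne hc.1 hc.2)

theorem swap_mem_houghton {n : ℕ} (P Q : XH n) : Equiv.swap P Q ∈ Houghton n := by
  classical
  refine ⟨0, {P, Q}, ?_⟩
  intro x hx
  simp only [Finset.mem_insert, Finset.mem_singleton, not_or] at hx
  rw [Equiv.swap_apply_of_ne_of_ne hx.1 hx.2]
  simp

/-- The transposition exchanging two points, as an element of `H_n`. -/
def hSwap {n : ℕ} (P Q : XH n) : Houghton n := ⟨Equiv.swap P Q, swap_mem_houghton P Q⟩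

/-- The set of generators `{g_2, …, g_n}` of `H_n`. -/
def houghtonGensOnly (n : ℕ) (hn : 0 < n) : Set (Houghton n) :=
  {x | ∃ (i : Fin n) (hi : i ≠ ray0 n hn), x = hGen n hn i hi}

/-- The chosen generating set of `H_n`: `{g_2, …, g_n}` for `n ≠ 2`,
and `{g_2, α}` for `n = 2`. -/
def houghtonGenSet (n : ℕ) (hn : 0 < n) : Set (Houghton n) :=
  if n = 2 then houghtonGensOnly n hn ∪ {hAlpha n hn} else houghtonGensOnly n hn

/-- Word length with respect to a set of generators (and their inverses). -/
noncomputable def wordLength {G : Type*} [Group G] (S : Set G) (g : G) : ℕ :=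
  sInf {k | ∃ l : List G, (∀ x ∈ l, x ∈ S ∨ x⁻¹ ∈ S) ∧ l.length = k ∧ l.prod = g}

/-- The growth rate of an endomorphism `φ`:
`GR(φ) = sup_g limsup_k |φ^k(g)|^{1/k}`. -/
noncomputable def growthRate {G : Type*} [Group G] (S : Set G) (φ : G →* G) : ℝ :=
  ⨆ g : G, Filter.limsup
    (fun k : ℕ => (wordLength S ((⇑φ)^[k] g) : ℝ) ^ (1 / (k : ℝ))) Filter.atTop

/-- The orbit of `x` under the permutation `h`. -/
def permOrbit {α : Type*} (h : Equiv.Perm α) (x : α) : Set α :=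
  Set.range (fun k : ℤ => (h ^ k) x)

/-- `x` has infinite orbit under `h` (`x` is an essential point of `h`). -/
def InfiniteOrbit {α : Type*} (h : Equiv.Perm α) (x : α) : Prop :=
  (permOrbit h x).Infinite

/-- The image `φ(g_i)` as a permutation of `X_n`. -/
def imageGen {n : ℕ} (h0 : 0 < n) (φ : Houghton n →* Houghton n)
    (i : Fin n) (hi : i ≠ ray0 n h0) : Equiv.Perm (XH n) :=
  ↑(φ (hGen n h0 i hi))

/-- The image `φ(α)` as a permutation of `X_n`. -/
def imageAlpha {n : ℕ} (h0 : 0 < n) (φ : Houghton n →* Houghton n) : Equiv.Perm (XH n) :=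
  ↑(φ (hAlpha n h0))

/-- A transposition-orbit of an involution: a pair `{x, h x}` with `h x ≠ x`. -/
def TOrbit {Ω : Type*} (h : Equiv.Perm Ω) (T : Set Ω) : Prop :=
  ∃ x, h x ≠ x ∧ T = {x, h x}

/-- The zero-sum vectors in `ℤ^n`. -/
def zeroSum (n : ℕ) : AddSubgroup (Fin n → ℤ) where
  carrier := {m | ∑ j, m j = 0}
  zero_mem' := by simp
  add_mem' := by
    intro a b ha hb
    simp only [Set.mem_setOf_eq] at *
    simp [Finset.sum_add_distrib, ha, hb]
  neg_mem' := by
    intro a ha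
    simp only [Set.mem_setOf_eq] at *
    simp [ha]


/-! ### Auxiliary lemmas -/

section OrbitAux
variable {β : Type*} (σ : Equiv.Perm β) (x : β)

lemma not_infiniteOrbit_of_period {p : ℕ} (hp : 0 < p) (h : (σ ^ p) x = x) :
    ¬ InfiniteOrbit σ x := by
  intro hinf
  have hfix : Function.IsFixedPt (⇑(σ ^ (p : ℤ))) x := by
    rwa [zpow_natCast]
  apply hinf
  have hsub : permOrbit σ x ⊆ (fun j : ℕ => (σ ^ j) x) '' (Set.Iio p) := by
    rintro _ ⟨k, rfl⟩
    have hp' : (0:ℤ) < p := by exact_mod_cast hp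
    refine ⟨(k % (p:ℤ)).toNat, ?_, ?_⟩
    · have h1 : k % (p:ℤ) < p := Int.emod_lt_of_pos k hp'
      have h2 : 0 ≤ k % (p:ℤ) := Int.emod_nonneg k (by positivity)
      simp only [Set.mem_Iio]
      omega
    · have h2 : 0 ≤ k % (p:ℤ) := Int.emod_nonneg k (by positivity)
      have e1 : ((((k % (p:ℤ)).toNat : ℕ)) : ℤ) = k % (p:ℤ) := Int.toNat_of_nonneg h2
      have heq : (σ ^ ((k % (p:ℤ)).toNat)) x = (σ ^ (k % (p:ℤ))) x := by
        rw [← zpow_natCast, e1]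
      show (σ ^ ((k % (p:ℤ)).toNat)) x = (σ ^ k) x
      rw [heq]
      have hk : k % (p:ℤ) + (p:ℤ) * (k / p) = k := Int.emod_add_mul_ediv k p
      have hfix2 : (σ ^ ((p:ℤ) * (k / p))) x = x := by
        have := (hfix.perm_zpow (k / p))
        rwa [← zpow_mul] at this
      calc (σ ^ (k % (p:ℤ))) x = (σ ^ (k % (p:ℤ))) ((σ ^ ((p:ℤ) * (k / p))) x) := by
              rw [hfix2]
        _ = (σ ^ (k % (p:ℤ) + (p:ℤ) * (k / p))) x := by rw [zpow_add]; rfl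
        _ = (σ ^ k) x := by rw [hk]
  exact Set.Finite.subset ((Set.finite_Iio p).image _) hsub

lemma exists_period_of_not_infiniteOrbit (h : ¬ InfiniteOrbit σ x) :
    ∃ p : ℕ, 0 < p ∧ (σ ^ p) x = x := by
  rw [InfiniteOrbit, Set.not_infinite] at h
  have hni : ¬ Function.Injective (fun k : ℤ => (σ ^ k) x) := by
    intro hinj
    exact Set.infinite_range_of_injective hinj h
  rw [Function.not_injective_iff] at hni
  obtain ⟨a, b, hab, hne⟩ := hni
  have key : ∀ c d : ℤ, (σ ^ c) x = (σ ^ d) x → (σ ^ (c - d)) x = x := by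
    intro c d hcd
    have h1 : (σ ^ (-d)) ((σ ^ c) x) = (σ ^ (-d)) ((σ ^ d) x) := by rw [hcd]
    calc (σ ^ (c - d)) x = (σ ^ (-d + c)) x := by ring_nf
      _ = (σ ^ (-d)) ((σ ^ c) x) := by rw [zpow_add]; rfl
      _ = (σ ^ (-d)) ((σ ^ d) x) := h1
      _ = (σ ^ (-d + d)) x := by rw [zpow_add]; rfl
      _ = x := by simp
  rcases lt_trichotomy a b with hlt | heq | hgt
  · refine ⟨(b - a).toNat, by omega, ?_⟩
    have := key b a hab.symm
    rwa [← zpow_natCast, Int.toNat_of_nonneg (by omega)]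
  · exact absurd heq hne
  · refine ⟨(a - b).toNat, by omega, ?_⟩
    have := key a b hab
    rwa [← zpow_natCast, Int.toNat_of_nonneg (by omega)]

lemma pow_apply_injective_of_infiniteOrbit (hinf : InfiniteOrbit σ x) :
    Function.Injective (fun k : ℕ => (σ ^ k) x) := by
  intro a b hab
  by_contra hne
  rcases Nat.lt_or_ge a b with hlt | hge
  · have hb : b = a + (b - a) := by omega
    have h1 : (σ ^ a) ((σ ^ (b - a)) x) = (σ ^ a) x := by
      rw [← Equiv.Perm.mul_apply, ← pow_add, ← hb]
      exact hab.symm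
    exact not_infiniteOrbit_of_period σ x (by omega : 0 < b - a)
      ((σ ^ a).injective h1) hinf
  · have hlt : b < a := by omega
    have ha : a = b + (a - b) := by omega
    have h1 : (σ ^ b) ((σ ^ (a - b)) x) = (σ ^ b) x := by
      rw [← Equiv.Perm.mul_apply, ← pow_add, ← ha]
      exact hab
    exact not_infiniteOrbit_of_period σ x (by omega : 0 < a - b)
      ((σ ^ b).injective h1) hinf

end OrbitAux

section VecAux
variable {n : ℕ}

lemma hasTranslationVector_unique {g : Equiv.Perm (XH n)} {m m' : Fin n → ℤ}
    (h : HasTranslationVector g m) (h' : HasTranslationVector g m') : m = m' := by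
  obtain ⟨K, hK⟩ := h
  obtain ⟨K', hK'⟩ := h'
  funext j
  classical
  set N : ℕ := ((K ∪ K').sup Prod.snd) + 1 with hN
  have hmem : (j, N) ∉ K ∪ K' := by
    intro hc
    have := Finset.le_sup (f := Prod.snd) hc
    simp only at this
    omega
  have h1 := hK (j, N) (fun hc => hmem (Finset.mem_union_left _ hc))
  have h2 := hK' (j, N) (fun hc => hmem (Finset.mem_union_right _ hc))
  have e1 : ((g (j, N)).2 : ℤ) = (N : ℤ) + m j := h1.2
  have e2 : ((g (j, N)).2 : ℤ) = (N : ℤ) + m' j := h2.2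
  omega

lemma hasTranslationVector_inv {g : Equiv.Perm (XH n)} {m : Fin n → ℤ}
    (h : HasTranslationVector g m) : HasTranslationVector g⁻¹ (-m) := by
  classical
  obtain ⟨K, hK⟩ := h
  refine ⟨K.image g, fun x hx => ?_⟩
  have hy : g⁻¹ x ∉ K := by
    intro hc
    exact hx (Finset.mem_image.mpr ⟨g⁻¹ x, hc, g.apply_symm_apply x⟩)
  obtain ⟨e1, e2⟩ := hK _ hy
  rw [show g (g⁻¹ x) = x from g.apply_symm_apply x] at e1 e2
  refine ⟨e1.symm, ?_⟩
  rw [← e1] at e2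
  rw [Pi.neg_apply]
  omega

lemma supp_finite_of_involution {g : Equiv.Perm (XH n)}
    (hg : IsEventualTranslation g) (h2 : g * g = 1) : {x | g x ≠ x}.Finite := by
  obtain ⟨m, K, hK⟩ := hg
  have hginv : g⁻¹ = g := inv_eq_of_mul_eq_one_right h2
  have hinv : HasTranslationVector g (-m) := by
    have := hasTranslationVector_inv ⟨K, hK⟩
    rwa [hginv] at this
  have hm : m = 0 := by
    have := hasTranslationVector_unique ⟨K, hK⟩ hinv
    funext j
    have := congrFun this j
    simp only [Pi.neg_apply, Pi.zero_apply] at this ⊢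
    omega
  apply Set.Finite.subset K.finite_toSet
  intro x hx
  by_contra hc
  obtain ⟨e1, e2⟩ := hK x hc
  rw [hm] at e2
  simp only [Pi.zero_apply, add_zero, Nat.cast_inj] at e2
  exact hx (Prod.ext e1 e2)

end VecAux


section GenAux
variable {n : ℕ} (h0 : 0 < n) (i : Fin n) (hi : i ≠ ray0 n h0)

lemma gGen_inv_ray (p : ℕ) :
    (gGen n h0 i hi)⁻¹ (ray0 n h0, p) = (ray0 n h0, p + 1) := by
  show gInvFun n h0 i (ray0 n h0, p) = (ray0 n h0, p + 1)
  simp [gInvFun, Ne.symm hi]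

lemma gGen_inv_pow_ray (k p : ℕ) :
    ((gGen n h0 i hi)⁻¹ ^ k) (ray0 n h0, p) = (ray0 n h0, p + k) := by
  induction k with
  | zero => simp
  | succ k ih =>
    rw [pow_succ', Equiv.Perm.mul_apply, ih, gGen_inv_ray, Nat.add_assoc]

lemma commute_swap_of_disjoint {β : Type*} [DecidableEq β] {a b c d : β}
    (h1 : c ≠ a) (h2 : c ≠ b) (h3 : d ≠ a) (h4 : d ≠ b) :
    Commute (Equiv.swap a b) (Equiv.swap c d) := by
  have hs := Equiv.swap_apply_apply (Equiv.swap a b) c d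
  rw [Equiv.swap_apply_of_ne_of_ne h1 h2, Equiv.swap_apply_of_ne_of_ne h3 h4] at hs
  exact (eq_mul_inv_iff_mul_eq.mp hs).symm

lemma conj_rel (k : ℕ) :
    (hGen n h0 i hi)⁻¹ ^ k * hAlpha n h0 * (hGen n h0 i hi) ^ k
      = hSwap (ray0 n h0, k) (ray0 n h0, k + 1) := by
  apply Subtype.ext
  rw [Subgroup.coe_mul, Subgroup.coe_mul, Subgroup.coe_pow, Subgroup.coe_pow,
    Subgroup.coe_inv]
  show (gGen n h0 i hi)⁻¹ ^ k * alphaPerm n h0 * (gGen n h0 i hi) ^ k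
      = Equiv.swap (ray0 n h0, k) (ray0 n h0, k + 1)
  have hs := Equiv.swap_apply_apply ((gGen n h0 i hi)⁻¹ ^ k) (ray0 n h0, 0) (ray0 n h0, 1)
  rw [gGen_inv_pow_ray h0 i hi k 0, gGen_inv_pow_ray h0 i hi k 1] at hs
  rw [Nat.zero_add, Nat.add_comm 1 k] at hs
  rw [inv_pow, inv_inv] at hs
  exact hs.symm

end GenAux

/-- For `n ≥ 2`, an injective endomorphism `φ` of `H_n`, and any
`i ∈ {2,…,n}`: there is a point moved by `φ(α)` whose orbit under `φ(g_i)` is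
infinite; moreover for any point `x` in the support of `φ(α)` with infinite
orbit under `φ(g_i)`, the point `φ(α)(x)` also has infinite orbit under
`φ(g_i)`. -/
theorem monomorphism_alpha_moves_essential_point
    (n : ℕ) (hn : 2 ≤ n) (h0 : 0 < n)
    (φ : Houghton n →* Houghton n) (hφ : Function.Injective φ)
    (i : Fin n) (hi : i ≠ ray0 n h0) :
    (∃ x : XH n, imageAlpha h0 φ x ≠ x ∧ InfiniteOrbit (imageGen h0 φ i hi) x) ∧
    (∀ x : XH n, imageAlpha h0 φ x ≠ x → InfiniteOrbit (imageGen h0 φ i hi) x →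
      InfiniteOrbit (imageGen h0 φ i hi) (imageAlpha h0 φ x)) := by
  classical
  set A : Equiv.Perm (XH n) := imageAlpha h0 φ with hAdef
  set G : Equiv.Perm (XH n) := imageGen h0 φ i hi with hGdef
  -- basic facts
  have hα2 : hAlpha n h0 * hAlpha n h0 = 1 := by
    apply Subtype.ext
    rw [Subgroup.coe_mul, Subgroup.coe_one]
    exact Equiv.swap_mul_self _ _
  have hA2 : A * A = 1 := by
    have h1 : φ (hAlpha n h0) * φ (hAlpha n h0) = 1 := by
      rw [← map_mul, hα2, map_one]
    have h2 := congrArg Subtype.val h1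
    rw [Subgroup.coe_mul, Subgroup.coe_one] at h2
    exact h2
  have hAA : ∀ z : XH n, A (A z) = z := by
    intro z
    have h1 : (A * A) z = (1 : Equiv.Perm (XH n)) z := by rw [hA2]
    simpa using h1
  have hAmem : IsEventualTranslation A := (φ (hAlpha n h0)).2
  have hsupp : {x : XH n | A x ≠ x}.Finite := supp_finite_of_involution hAmem hA2
  -- fixed points of powers
  have hdvd : ∀ (y : XH n) (p P : ℕ), p ∣ P → (G ^ p) y = y → (G ^ P) y = y := by
    rintro y p P ⟨c, rfl⟩ hy
    rw [pow_mul]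
    exact Function.IsFixedPt.perm_pow hy c
  -- the commuting relation for k ≥ 2
  have hcrel : ∀ k : ℕ, 2 ≤ k → Commute A ((G⁻¹ ^ k) * A * (G ^ k)) := by
    intro k hk
    have h1 : Commute (hAlpha n h0)
        ((hGen n h0 i hi)⁻¹ ^ k * hAlpha n h0 * (hGen n h0 i hi) ^ k) := by
      rw [conj_rel]
      have hc : Commute (alphaPerm n h0)
          (Equiv.swap ((ray0 n h0 : Fin n), k) (ray0 n h0, k + 1)) := by
        apply commute_swap_of_disjoint
        · intro h; have := congrArg Prod.snd h; simp at this <;> omega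
        · intro h; have := congrArg Prod.snd h; simp at this <;> omega
        · intro h; have := congrArg Prod.snd h; simp at this <;> omega
        · intro h; have := congrArg Prod.snd h; simp at this <;> omega
      apply Subtype.ext
      rw [Subgroup.coe_mul, Subgroup.coe_mul]
      exact hc
    have h2 := h1.map ((Houghton n).subtype.comp φ)
    have e : ((Houghton n).subtype.comp φ)
        ((hGen n h0 i hi)⁻¹ ^ k * hAlpha n h0 * (hGen n h0 i hi) ^ k)
        = (G⁻¹ ^ k) * A * (G ^ k) := by
      rw [map_mul, map_mul, map_pow, map_inv, map_pow]
      rfl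
    rw [e] at h2
    exact h2
  -- Part 2
  have part2 : ∀ x : XH n, A x ≠ x → InfiniteOrbit G x → InfiniteOrbit G (A x) := by
    intro x hx hinf
    by_contra hni
    obtain ⟨p, hp, hper⟩ := exists_period_of_not_infiniteOrbit G (A x) hni
    have hBadfin : ((fun k : ℕ => (G ^ k) x) ⁻¹' {z : XH n | A z ≠ z}).Finite := by
      have hinj := pow_apply_injective_of_infiniteOrbit G x hinf
      exact Set.Finite.preimage (Set.injOn_of_injective hinj) hsupp
    obtain ⟨N, hN⟩ := hBadfin.bddAbove
    have key : ∀ k : ℕ, 2 ≤ k → p ∣ k → A ((G ^ k) x) = (G ^ k) x →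
        (G⁻¹ ^ k) x = A x := by
      intro k hk2 hkp hkout
      have hcomm := hcrel k hk2
      have heval : (A * ((G⁻¹ ^ k) * A * (G ^ k))) x
          = (((G⁻¹ ^ k) * A * (G ^ k)) * A) x := by rw [hcomm]
      have lhs : (A * ((G⁻¹ ^ k) * A * (G ^ k))) x = A x := by
        simp only [Equiv.Perm.mul_apply]
        rw [hkout, inv_pow, Equiv.Perm.inv_def, Equiv.symm_apply_apply]
      have hyfix : (G ^ k) (A x) = A x := hdvd (A x) p k hkp hper
      have rhs : (((G⁻¹ ^ k) * A * (G ^ k)) * A) x = (G⁻¹ ^ k) x := by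
        simp only [Equiv.Perm.mul_apply]
        rw [hyfix, hAA]
      rw [lhs, rhs] at heval
      exact heval.symm
    have hcond : ∀ m : ℕ, 2 ≤ m → (G⁻¹ ^ (p * (N + m))) x = A x := by
      intro m hm
      have hk2 : 2 ≤ p * (N + m) := by
        have h1 : N + m ≤ p * (N + m) := Nat.le_mul_of_pos_left _ hp
        omega
      have hbig : N < p * (N + m) := by
        have h1 : N + m ≤ p * (N + m) := Nat.le_mul_of_pos_left _ hp
        omega
      have hout : A ((G ^ (p * (N + m))) x) = (G ^ (p * (N + m))) x := by
        by_contra hw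
        have hmem : p * (N + m) ∈ (fun k : ℕ => (G ^ k) x) ⁻¹' {z : XH n | A z ≠ z} := hw
        have := hN hmem
        omega
      exact key _ hk2 ⟨N + m, rfl⟩ hout
    have e1 := hcond 2 le_rfl
    have e2 := hcond 3 (by omega)
    have hk12 : p * (N + 3) = p * (N + 2) + p := by ring
    have e3 : (G ^ (p * (N + 2) + p)) ((G⁻¹ ^ (p * (N + 2))) x)
        = (G ^ (p * (N + 2) + p)) ((G⁻¹ ^ (p * (N + 2) + p)) x) := by
      rw [e1, ← hk12, e2]
    have e4 : (G ^ (p * (N + 2) + p)) ((G⁻¹ ^ (p * (N + 2) + p)) x) = x := by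
      rw [inv_pow, Equiv.Perm.inv_def, Equiv.apply_symm_apply]
    have e5 : (G ^ (p * (N + 2) + p)) ((G⁻¹ ^ (p * (N + 2))) x) = (G ^ p) x := by
      rw [Nat.add_comm (p * (N + 2)) p, pow_add, Equiv.Perm.mul_apply,
        inv_pow, Equiv.Perm.inv_def, Equiv.apply_symm_apply]
    rw [e5, e4] at e3
    exact not_infiniteOrbit_of_period G x hp e3 hinf
  refine ⟨?_, part2⟩
  -- Part 1
  by_contra hc
  push_neg at hc
  have hper : ∀ y : XH n, ∃ p : ℕ, 0 < p ∧ (A y ≠ y → (G ^ p) y = y) := by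
    intro y
    by_cases hy : A y ≠ y
    · obtain ⟨p, hp, hfix⟩ := exists_period_of_not_infiniteOrbit G y (hc y hy)
      exact ⟨p, hp, fun _ => hfix⟩
    · exact ⟨1, one_pos, fun h => absurd h hy⟩
  choose p hp hfix using hper
  set P : ℕ := ∏ y ∈ hsupp.toFinset, p y with hP
  have hPpos : 0 < P := Finset.prod_pos (fun y _ => hp y)
  have hPfix : ∀ y : XH n, A y ≠ y → (G ^ P) y = y := by
    intro y hy
    have hmem : y ∈ hsupp.toFinset := hsupp.mem_toFinset.mpr hy
    exact hdvd y (p y) P (Finset.dvd_prod_of_mem p hmem) (hfix y hy)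
  have hcomm : A * (G ^ P) = (G ^ P) * A := by
    apply Equiv.ext
    intro z
    simp only [Equiv.Perm.mul_apply]
    by_cases hz : A z ≠ z
    · rw [hPfix z hz, hPfix (A z) (by rw [hAA]; exact Ne.symm hz)]
    · have haz : A z = z := not_not.mp hz
      rw [haz]
      by_contra hw
      have h1 := hPfix _ hw
      have h2 := (G ^ P).injective h1
      rw [h2] at hw
      exact hw haz
  have hsub : φ (hAlpha n h0) * φ (hGen n h0 i hi) ^ P
      = φ (hGen n h0 i hi) ^ P * φ (hAlpha n h0) := by
    apply Subtype.ext
    rw [Subgroup.coe_mul, Subgroup.coe_mul, Subgroup.coe_pow]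
    exact hcomm
  have hinj : hAlpha n h0 * hGen n h0 i hi ^ P = hGen n h0 i hi ^ P * hAlpha n h0 := by
    apply hφ
    rw [map_mul, map_mul, map_pow]
    exact hsub
  have hconj : (hGen n h0 i hi)⁻¹ ^ P * hAlpha n h0 * (hGen n h0 i hi) ^ P
      = hAlpha n h0 := by
    rw [inv_pow, mul_assoc, hinj, ← mul_assoc, inv_mul_cancel, one_mul]
  rw [conj_rel] at hconj
  have hval := congrArg Subtype.val hconj
  have hev := congrArg (fun σ : Equiv.Perm (XH n) => σ ((ray0 n h0 : Fin n), (0:ℕ))) hval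
  have hne1 : ((ray0 n h0 : Fin n), (0:ℕ)) ≠ (ray0 n h0, P) := by
    intro h; have := congrArg Prod.snd h; simp at this <;> omega
  have hne2 : ((ray0 n h0 : Fin n), (0:ℕ)) ≠ (ray0 n h0, P + 1) := by
    intro h; have := congrArg Prod.snd h; simp at this <;> omega
  have hl : (hSwap ((ray0 n h0 : Fin n), P) (ray0 n h0, P + 1)).val
      ((ray0 n h0 : Fin n), (0:ℕ)) = ((ray0 n h0 : Fin n), (0:ℕ)) :=
    Equiv.swap_apply_of_ne_of_ne hne1 hne2
  have hr : (hAlpha n h0).val ((ray0 n h0 : Fin n), (0:ℕ))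
      = ((ray0 n h0 : Fin n), (1:ℕ)) := Equiv.swap_apply_left _ _
  rw [hl, hr] at hev
  have := congrArg Prod.snd hev
  simp at this
end

section
/- Let Ω be a set and let β, γ be finitely supported permutations of Ω with β² = γ² = 1 such that the product βγ has order 3 (i.e. (βγ)³ = 1 and βγ ≠ 1). Call a two-element set {x, β(x)} with β(x) ≠ x a transposition-orbit of β, and similarly for γ. Then: (1) every transposition-orbit of β meets at least one and at most two transposition-orbits of γ, and symmetrically every transposition-orbit of γ meets at least one and at most two transposition-orbits of β; (2) for a transposition-orbit T of β and a transposition-orbit T' of γ, T' is the unique transposition-orbit of γ meeting T if and only if T is the unique transposition-orbit of β meeting T'; consequently this correspondence is a bijection from the set of transposition-orbits of β meeting exactly one transposition-orbit of γ onto the set of transposition-orbits of γ meeting exactly one transposition-orbit of β. -/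
section AuxTOrbit

variable {Ω : Type*}

lemma perm_sq_apply {h : Equiv.Perm Ω} (h2 : h ^ 2 = 1) (z : Ω) : h (h z) = z := by
  have := DFunLike.congr_fun h2 z
  simpa [pow_two] using this

lemma torbit_mem_eq {h : Equiv.Perm Ω} (h2 : h ^ 2 = 1) {S : Set Ω} (hS : TOrbit h S)
    {y : Ω} (hy : y ∈ S) : h y ≠ y ∧ S = {y, h y} := by
  obtain ⟨z, hz, rfl⟩ := hS
  simp only [Set.mem_insert_iff, Set.mem_singleton_iff] at hy
  rcases hy with rfl | rfl
  · exact ⟨hz, rfl⟩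
  · refine ⟨?_, ?_⟩
    · rw [perm_sq_apply h2]
      exact fun e => hz e.symm
    · rw [perm_sq_apply h2]
      exact Set.pair_comm z (h z)

lemma torbit_unique {h : Equiv.Perm Ω} (h2 : h ^ 2 = 1) {S S' : Set Ω}
    (hS : TOrbit h S) (hS' : TOrbit h S') {y : Ω} (hy : y ∈ S) (hy' : y ∈ S') : S = S' := by
  rw [(torbit_mem_eq h2 hS hy).2, (torbit_mem_eq h2 hS' hy').2]

lemma torbit_exists (β γ : Equiv.Perm Ω) (hβ2 : β ^ 2 = 1)
    (h3 : (β * γ) ^ 3 = 1) {T : Set Ω} (hT : TOrbit β T) :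
    ∃ T' : Set Ω, TOrbit γ T' ∧ (T ∩ T').Nonempty := by
  obtain ⟨x, hx, rfl⟩ := hT
  by_cases h1 : γ x = x
  · by_cases h2 : γ (β x) = β x
    · exfalso
      have h3x := DFunLike.congr_fun h3 x
      simp only [pow_succ, pow_zero, one_mul, Equiv.Perm.mul_apply,
        Equiv.Perm.one_apply, h1, h2, perm_sq_apply hβ2] at h3x
      exact hx h3x
    · exact ⟨{β x, γ (β x)}, ⟨β x, h2, rfl⟩, β x, by simp, by simp⟩
  · exact ⟨{x, γ x}, ⟨x, h1, rfl⟩, x, by simp, by simp⟩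

lemma torbit_keyC (β γ : Equiv.Perm Ω) (hβ2 : β ^ 2 = 1) (hγ2 : γ ^ 2 = 1)
    (h3 : (β * γ) ^ 3 = 1) {T T' : Set Ω} (hT : TOrbit β T)
    (hset : {S : Set Ω | TOrbit γ S ∧ (T ∩ S).Nonempty} = {T'}) :
    {S : Set Ω | TOrbit β S ∧ (S ∩ T').Nonempty} = {T} := by
  have hT'mem : TOrbit γ T' ∧ (T ∩ T').Nonempty := by
    have : T' ∈ {S : Set Ω | TOrbit γ S ∧ (T ∩ S).Nonempty} := by
      rw [hset]; rfl
    exact this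
  obtain ⟨y, hyT, hyT'⟩ := hT'mem.2
  obtain ⟨hβy, hTeq⟩ := torbit_mem_eq hβ2 hT hyT
  obtain ⟨hγy, hT'eq⟩ := torbit_mem_eq hγ2 hT'mem.1 hyT'
  ext S
  simp only [Set.mem_setOf_eq, Set.mem_singleton_iff]
  constructor
  · rintro ⟨hS, z, hzS, hzT'⟩
    rw [hT'eq] at hzT'
    simp only [Set.mem_insert_iff, Set.mem_singleton_iff] at hzT'
    obtain ⟨hβz, _⟩ := torbit_mem_eq hβ2 hS hzS
    rcases hzT' with rfl | rfl
    · exact torbit_unique hβ2 hS hT hzS hyT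
    · by_cases hc : γ y ∈ T
      · exact torbit_unique hβ2 hS hT hzS hc
      exfalso
      by_cases hg : γ (β y) = β y
      · apply hβz
        have h3b := DFunLike.congr_fun h3 (β y)
        simp only [pow_succ, pow_zero, one_mul, Equiv.Perm.mul_apply,
          Equiv.Perm.one_apply, hg, perm_sq_apply hβ2] at h3b
        have h4 := β.injective h3b
        apply γ.injective
        rw [h4, perm_sq_apply hγ2]
      · have hS2 : ({β y, γ (β y)} : Set Ω) ∈ ({T'} : Set (Set Ω)) := by
          rw [← hset]
          exact ⟨⟨β y, hg, rfl⟩, β y, by rw [hTeq]; exact Or.inr rfl, Or.inl rfl⟩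
        rw [Set.mem_singleton_iff] at hS2
        have hmem : β y ∈ T' := by rw [← hS2]; exact Or.inl rfl
        rw [hT'eq] at hmem
        simp only [Set.mem_insert_iff, Set.mem_singleton_iff] at hmem
        rcases hmem with h | h
        · exact hβy h
        · exact hc (by rw [hTeq]; exact Or.inr h.symm)
  · rintro rfl
    exact ⟨hT, y, hyT, hyT'⟩

end AuxTOrbit

/-- Let `β, γ` be finitely supported involutions whose product
`βγ` has order `3`.  Then every transposition-orbit of `β` meets at least one
and at most two transposition-orbits of `γ` (and symmetrically), and a
transposition-orbit `T'` of `γ` is the unique one meeting a transposition-orbit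
`T` of `β` iff `T` is the unique transposition-orbit of `β` meeting `T'`. -/
theorem involutions_order_three_transposition_orbits
    {Ω : Type*} (β γ : Equiv.Perm Ω)
    (hβf : {x | β x ≠ x}.Finite) (hγf : {x | γ x ≠ x}.Finite)
    (hβ2 : β ^ 2 = 1) (hγ2 : γ ^ 2 = 1)
    (h3 : (β * γ) ^ 3 = 1) (hne : β * γ ≠ 1) :
    (∀ T : Set Ω, TOrbit β T →
      (∃ T' : Set Ω, TOrbit γ T' ∧ (T ∩ T').Nonempty) ∧
      (∀ T1 T2 T3 : Set Ω, TOrbit γ T1 → TOrbit γ T2 → TOrbit γ T3 →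
        (T ∩ T1).Nonempty → (T ∩ T2).Nonempty → (T ∩ T3).Nonempty →
        T1 = T2 ∨ T1 = T3 ∨ T2 = T3)) ∧
    (∀ T' : Set Ω, TOrbit γ T' →
      (∃ T : Set Ω, TOrbit β T ∧ (T ∩ T').Nonempty) ∧
      (∀ T1 T2 T3 : Set Ω, TOrbit β T1 → TOrbit β T2 → TOrbit β T3 →
        (T1 ∩ T').Nonempty → (T2 ∩ T').Nonempty → (T3 ∩ T').Nonempty →
        T1 = T2 ∨ T1 = T3 ∨ T2 = T3)) ∧
    (∀ T T' : Set Ω, TOrbit β T → TOrbit γ T' →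
      ({S : Set Ω | TOrbit γ S ∧ (T ∩ S).Nonempty} = {T'} ↔
       {S : Set Ω | TOrbit β S ∧ (S ∩ T').Nonempty} = {T})) := by
  have hβi : β⁻¹ = β := inv_eq_of_mul_eq_one_right (by rw [← pow_two]; exact hβ2)
  have hγi : γ⁻¹ = γ := inv_eq_of_mul_eq_one_right (by rw [← pow_two]; exact hγ2)
  have hγβ3 : (γ * β) ^ 3 = 1 := by
    have : γ * β = (β * γ)⁻¹ := by rw [mul_inv_rev, hβi, hγi]
    rw [this, inv_pow, h3, inv_one]
  refine ⟨?_, ?_, ?_⟩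
  · intro T hT
    refine ⟨torbit_exists β γ hβ2 h3 hT, ?_⟩
    intro T1 T2 T3 h1 h2 h3' n1 n2 n3
    obtain ⟨x, hx, rfl⟩ := hT
    obtain ⟨w1, hw1T, hw1⟩ := n1
    obtain ⟨w2, hw2T, hw2⟩ := n2
    obtain ⟨w3, hw3T, hw3⟩ := n3
    have e1 : w1 = x ∨ w1 = β x := by simpa using hw1T
    have e2 : w2 = x ∨ w2 = β x := by simpa using hw2T
    have e3 : w3 = x ∨ w3 = β x := by simpa using hw3T
    rcases e1 with rfl | rfl <;> rcases e2 with rfl | rfl <;> rcases e3 with rfl | rfl <;>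
      first
        | exact Or.inl (torbit_unique hγ2 h1 h2 hw1 hw2)
        | exact Or.inr (Or.inl (torbit_unique hγ2 h1 h3' hw1 hw3))
        | exact Or.inr (Or.inr (torbit_unique hγ2 h2 h3' hw2 hw3))
  · intro T' hT'
    constructor
    · obtain ⟨T, hTo, w, hw1, hw2⟩ := torbit_exists γ β hγ2 hγβ3 hT'
      exact ⟨T, hTo, w, hw2, hw1⟩
    · intro T1 T2 T3 h1 h2 h3' n1 n2 n3
      obtain ⟨x, hx, rfl⟩ := hT'
      obtain ⟨w1, hw1, hw1T⟩ := n1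
      obtain ⟨w2, hw2, hw2T⟩ := n2
      obtain ⟨w3, hw3, hw3T⟩ := n3
      have e1 : w1 = x ∨ w1 = γ x := by simpa using hw1T
      have e2 : w2 = x ∨ w2 = γ x := by simpa using hw2T
      have e3 : w3 = x ∨ w3 = γ x := by simpa using hw3T
      rcases e1 with rfl | rfl <;> rcases e2 with rfl | rfl <;> rcases e3 with rfl | rfl <;>
        first
          | exact Or.inl (torbit_unique hβ2 h1 h2 hw1 hw2)
          | exact Or.inr (Or.inl (torbit_unique hβ2 h1 h3' hw1 hw3))
          | exact Or.inr (Or.inr (torbit_unique hβ2 h2 h3' hw2 hw3))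
  · intro T T' hT hT'
    have comm1 : {S : Set Ω | TOrbit β S ∧ (S ∩ T').Nonempty}
        = {S : Set Ω | TOrbit β S ∧ (T' ∩ S).Nonempty} := by
      ext S; rw [Set.mem_setOf_eq, Set.mem_setOf_eq, Set.inter_comm]
    have comm2 : {S : Set Ω | TOrbit γ S ∧ (T ∩ S).Nonempty}
        = {S : Set Ω | TOrbit γ S ∧ (S ∩ T).Nonempty} := by
      ext S; rw [Set.mem_setOf_eq, Set.mem_setOf_eq, Set.inter_comm]
    constructor
    · intro hset
      exact torbit_keyC β γ hβ2 hγ2 h3 hT hset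
    · intro hset
      rw [comm1] at hset
      rw [comm2]
      exact torbit_keyC γ β hγ2 hβ2 hγβ3 hT' hset
end

section
/- For every n ≥ 3, there exists an injective group endomorphism φ of Houghton's group H_n with φ(g_i) = g_i² for all i ∈ {2,…,n}, and φ is not surjective. In particular, H_n is not co-Hopfian. -/
namespace HoughtonCoHopf

variable {n : ℕ}

/-- The "bit" of a point: position parity, flipped off the first ray. -/
def Fb (h0 : 0 < n) (x : XH n) : ℕ :=
  if x.1 = ray0 n h0 then x.2 % 2 else 1 - x.2 % 2

/-- The doubled action of `g`. -/
def F (h0 : 0 < n) (g : Equiv.Perm (XH n)) (x : XH n) : XH n :=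
  ((g (x.1, x.2 / 2)).1,
   2 * (g (x.1, x.2 / 2)).2 +
     (if (g (x.1, x.2 / 2)).1 = ray0 n h0 then Fb h0 x else 1 - Fb h0 x))

lemma F_apply (h0 : 0 < n) (g : Equiv.Perm (XH n)) (x : XH n) :
    F h0 g x = ((g (x.1, x.2 / 2)).1,
      2 * (g (x.1, x.2 / 2)).2 +
        (if (g (x.1, x.2 / 2)).1 = ray0 n h0 then Fb h0 x else 1 - Fb h0 x)) := rfl

lemma Fb_F (h0 : 0 < n) (g : Equiv.Perm (XH n)) (x : XH n) :
    Fb h0 (F h0 g x) = Fb h0 x := by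
  simp only [F, Fb]
  split_ifs <;> omega

lemma inner_eq (h0 : 0 < n) (g : Equiv.Perm (XH n)) (x : XH n) :
    ((F h0 g x).1, (F h0 g x).2 / 2) = g (x.1, x.2 / 2) := by
  simp only [F, Fb]
  refine Prod.ext rfl ?_
  split_ifs <;> omega

lemma F_mul (h0 : 0 < n) (g h : Equiv.Perm (XH n)) (x : XH n) :
    F h0 g (F h0 h x) = F h0 (g * h) x := by
  have h1 := inner_eq h0 h x
  have h2 := Fb_F h0 h x
  rw [F_apply h0 g (F h0 h x), h1, h2, F_apply h0 (g * h) x, Equiv.Perm.mul_apply]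

lemma F_one (h0 : 0 < n) (x : XH n) : F h0 1 x = x := by
  simp only [F, Fb, Equiv.Perm.one_apply]
  refine Prod.ext rfl ?_
  split_ifs <;> omega

/-- The doubled permutation. -/
def phiPerm (h0 : 0 < n) (g : Equiv.Perm (XH n)) : Equiv.Perm (XH n) where
  toFun := F h0 g
  invFun := F h0 g⁻¹
  left_inv := fun x => by rw [F_mul, inv_mul_cancel, F_one]
  right_inv := fun x => by rw [F_mul, mul_inv_cancel, F_one]

lemma phiPerm_mem (h0 : 0 < n) (g : Equiv.Perm (XH n)) (hg : g ∈ Houghton n) :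
    phiPerm h0 g ∈ Houghton n := by
  classical
  obtain ⟨m, K, hK⟩ := hg
  refine ⟨fun j => 2 * m j,
    (K.image fun y => (y.1, 2 * y.2)) ∪ (K.image fun y => (y.1, 2 * y.2 + 1)), ?_⟩
  rintro ⟨j, q⟩ hx
  simp only [Finset.mem_union, not_or] at hx
  have hin : (j, q / 2) ∉ K := by
    intro hc
    rcases Nat.even_or_odd q with he | he
    · obtain ⟨t, rfl⟩ := he
      exact hx.1 (Finset.mem_image.mpr ⟨((j, (t + t) / 2) : XH n), hc, by
        exact Prod.ext rfl (by show 2 * ((t + t) / 2) = t + t; omega)⟩)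
    · obtain ⟨t, rfl⟩ := he
      exact hx.2 (Finset.mem_image.mpr ⟨((j, (2 * t + 1) / 2) : XH n), hc, by
        exact Prod.ext rfl (by show 2 * ((2 * t + 1) / 2) + 1 = 2 * t + 1; omega)⟩)
  obtain ⟨e1', e2'⟩ := hK (j, q / 2) hin
  have e1 : (g (j, q / 2)).1 = j := e1'
  have e2 : ((g (j, q / 2)).2 : ℤ) = ((q / 2 : ℕ) : ℤ) + m j := e2'
  constructor
  · exact e1
  · show ((2 * (g (j, q / 2)).2 +
      (if (g (j, q / 2)).1 = ray0 n h0
        then Fb h0 (j, q) else 1 - Fb h0 (j, q)) : ℕ) : ℤ) = (q : ℤ) + 2 * m j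
    simp only [Fb, e1]
    split_ifs <;> push_cast <;> omega

/-- The doubling endomorphism of Houghton's group. -/
def phi (h0 : 0 < n) : Houghton n →* Houghton n where
  toFun g := ⟨phiPerm h0 g.1, phiPerm_mem h0 g.1 g.2⟩
  map_one' := Subtype.ext (Equiv.ext fun x => F_one h0 x)
  map_mul' g h := Subtype.ext (Equiv.ext fun x => (F_mul h0 g.1 h.1 x).symm)

lemma F_probe (h0 : 0 < n) (g : Equiv.Perm (XH n)) (j : Fin n) (p : ℕ) :
    F h0 g (j, 2 * p + if j = ray0 n h0 then 0 else 1) =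
      ((g (j, p)).1, 2 * (g (j, p)).2 +
        if (g (j, p)).1 = ray0 n h0 then 0 else 1) := by
  have hdiv : (2 * p + if j = ray0 n h0 then 0 else 1) / 2 = p := by
    split_ifs <;> omega
  have hb : Fb h0 (j, 2 * p + if j = ray0 n h0 then 0 else 1) = 0 := by
    simp only [Fb]; split_ifs <;> omega
  simp only [F, hdiv, hb, Nat.sub_zero]

lemma phi_inj (h0 : 0 < n) : Function.Injective (phi h0) := by
  intro g g' hgg
  apply Subtype.ext; apply Equiv.ext
  rintro ⟨j, p⟩
  have hval : phiPerm h0 g.1 = phiPerm h0 g'.1 := congrArg Subtype.val hgg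
  have hF : F h0 g.1 (j, 2 * p + if j = ray0 n h0 then 0 else 1)
      = F h0 g'.1 (j, 2 * p + if j = ray0 n h0 then 0 else 1) :=
    Equiv.ext_iff.mp hval _
  rw [F_probe, F_probe, Prod.mk.injEq] at hF
  obtain ⟨h1, h2⟩ := hF
  show (g.1 (j, p) : XH n) = g'.1 (j, p)
  refine Prod.ext h1 ?_
  rw [h1] at h2
  split_ifs at h2 <;> omega

lemma phi_not_surj (h0 : 0 < n) : ¬ Function.Surjective (phi h0) := by
  intro hs
  obtain ⟨g, hg⟩ := hs (hSwap (ray0 n h0, 0) (ray0 n h0, 1))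
  have hval : phiPerm h0 g.1 = Equiv.swap (ray0 n h0, 0) (ray0 n h0, 1) :=
    congrArg Subtype.val hg
  have h1 : F h0 g.1 (ray0 n h0, 0) = (ray0 n h0, 1) := by
    have := Equiv.ext_iff.mp hval ((ray0 n h0, 0) : XH n)
    rwa [Equiv.swap_apply_left] at this
  have h2 := Fb_F h0 g.1 ((ray0 n h0, 0) : XH n)
  rw [h1] at h2
  simp [Fb] at h2

lemma phi_gGen (h0 : 0 < n) (i : Fin n) (hi : i ≠ ray0 n h0) :
    phi h0 (hGen n h0 i hi) = hGen n h0 i hi ^ 2 := by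
  apply Subtype.ext; apply Equiv.ext
  rintro ⟨j, q⟩
  show F h0 (gGen n h0 i hi) (j, q) = (gGen n h0 i hi) ((gGen n h0 i hi) (j, q))
  simp only [F, Fb, gGen, gFun, Equiv.coe_fn_mk]
  split_ifs <;> simp_all [Prod.ext_iff] <;> omega

end HoughtonCoHopf

/-- For every `n ≥ 3` there is an injective endomorphism `φ` of
`H_n` with `φ(g_i) = g_i²` for all `i ∈ {2,…,n}` which is not surjective; in
particular `H_n` is not co-Hopfian. -/
theorem houghton_not_coHopfian (n : ℕ) (hn : 3 ≤ n) (h0 : 0 < n) :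
    ∃ φ : Houghton n →* Houghton n, Function.Injective φ ∧
      (∀ (i : Fin n) (hi : i ≠ ray0 n h0),
        φ (hGen n h0 i hi) = hGen n h0 i hi ^ 2) ∧
      ¬ Function.Surjective φ :=
  ⟨HoughtonCoHopf.phi h0, HoughtonCoHopf.phi_inj h0,
    fun i hi => HoughtonCoHopf.phi_gGen h0 i hi, HoughtonCoHopf.phi_not_surj h0⟩
end
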